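/- Let X be a compact complex manifold of dimension n and r ≥ 1. If a (p,q)-form α is E_rĒ_r-exact, then α is d-exact; explicitly, if α = ∂ζ + ∂∂̄ξ + ∂̄η with ∂̄ζ = ∂v_{r-3}, ∂̄v_{r-3} = ∂v_{r-4}, …, ∂̄v₀ = 0 and ∂η = ∂̄u_{r-3}, …, ∂u₀ = 0, then α = d[(ζ+η) + ∂̄ξ − w_{r-3} + ⋯ + (−1)^r w₀] where w_j = u_j + v_j. -/

import Mathlib

namespace Stmt14

variable {K : Type} [Field K] {V : Type} [AddCommGroup V] [Module K V]

/-- A bigraded double complex structure on `V`: grading `g p q` (the `(p,q)`-forms),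
`d1 = ∂`, `d2 = ∂̄`. -/
structure IsBigradedDC (g : ℤ → ℤ → Submodule K V) (d1 d2 : V →ₗ[K] V) : Prop where
  internal : DirectSum.IsInternal (fun pq : ℤ × ℤ => g pq.1 pq.2)
  d1_sq : ∀ v : V, d1 (d1 v) = 0
  d2_sq : ∀ v : V, d2 (d2 v) = 0
  anticomm : ∀ v : V, d1 (d2 v) + d2 (d1 v) = 0
  d1_mem : ∀ p q : ℤ, ∀ v ∈ g p q, d1 v ∈ g (p + 1) q
  d2_mem : ∀ p q : ℤ, ∀ v ∈ g p q, d2 v ∈ g p (q + 1)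

def transpose (g : ℤ → ℤ → Submodule K V) : ℤ → ℤ → Submodule K V := fun p q => g q p

/-- "`d1 x` runs at least `m` times": there are `u₁, …, u_m` with
`∂x = ∂̄u₁, ∂u₁ = ∂̄u₂, …, ∂u_{m-1} = ∂̄u_m` (here `u l` is `u_{l+1}`). -/
def RunsTimes (g : ℤ → ℤ → Submodule K V) (d1 d2 : V →ₗ[K] V) (m : ℕ) (p q : ℤ) (x : V) :
    Prop :=
  ∃ u : ℕ → V, (∀ l : ℕ, u l ∈ g (p + 1 + (l : ℤ)) (q - 1 - (l : ℤ))) ∧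
    (1 ≤ m → d1 x = d2 (u 0)) ∧ ∀ l : ℕ, l + 2 ≤ m → d1 (u l) = d2 (u (l + 1))

/-- `x` (a pure `(p,q)`-form) is `E_r`-closed. -/
def ErClosed (g : ℤ → ℤ → Submodule K V) (d1 d2 : V →ₗ[K] V) (r : ℕ) (p q : ℤ) (x : V) :
    Prop :=
  d2 x = 0 ∧ RunsTimes g d1 d2 (r - 1) p q x

/-- "`d2 z` reaches `0` in at most `m` steps":
`∂̄z = ∂v_{m-2}, ∂̄v_{m-2} = ∂v_{m-3}, …, ∂̄v₀ = 0` (here `v l` is `v_{m-2-l}`). -/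
def ReachesZero (g : ℤ → ℤ → Submodule K V) (d1 d2 : V →ₗ[K] V) (m : ℕ) (p q : ℤ) (z : V) :
    Prop :=
  ∃ v : ℕ → V, (∀ l : ℕ, v l ∈ g (p - 1 - (l : ℤ)) (q + 1 + (l : ℤ))) ∧
    (m = 1 → d2 z = 0) ∧
    (2 ≤ m → d2 z = d1 (v 0) ∧ d2 (v (m - 2)) = 0 ∧
      ∀ l : ℕ, l + 3 ≤ m → d2 (v l) = d1 (v (l + 1)))

/-- `x` (a pure `(p,q)`-form) is `E_r`-exact. -/
def ErExact (g : ℤ → ℤ → Submodule K V) (d1 d2 : V →ₗ[K] V) (r : ℕ) (p q : ℤ) (x : V) :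
    Prop :=
  ∃ z ξ : V, z ∈ g (p - 1) q ∧ ξ ∈ g p (q - 1) ∧ x = d1 z + d2 ξ ∧
    (r = 1 → z = 0) ∧ (2 ≤ r → ReachesZero g d1 d2 (r - 1) (p - 1) q z)

/-- `x` is `Ē_r`-exact (the conjugate notion: swap `∂` and `∂̄`, transpose the bigrading). -/
def ErBarExact (g : ℤ → ℤ → Submodule K V) (d1 d2 : V →ₗ[K] V) (r : ℕ) (p q : ℤ) (x : V) :
    Prop :=
  ErExact (transpose g) d2 d1 r q p x

/-- `x` is `E_rĒ_r`-closed: both `∂x` and `∂̄x` run at least `r-1` times. -/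
def ErErBarClosed (g : ℤ → ℤ → Submodule K V) (d1 d2 : V →ₗ[K] V) (r : ℕ) (p q : ℤ)
    (x : V) : Prop :=
  RunsTimes g d1 d2 (r - 1) p q x ∧ RunsTimes (transpose g) d2 d1 (r - 1) q p x

/-- `x` is `E_rĒ_r`-exact: `x = ∂z + ∂∂̄ξ + ∂̄η` with `∂̄z` and `∂η`
reaching `0` in at most `r-1` steps. -/
def ErErBarExact (g : ℤ → ℤ → Submodule K V) (d1 d2 : V →ₗ[K] V) (r : ℕ) (p q : ℤ)
    (x : V) : Prop :=
  ∃ z ξ η : V, z ∈ g (p - 1) q ∧ ξ ∈ g (p - 1) (q - 1) ∧ η ∈ g p (q - 1) ∧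
    x = d1 z + d1 (d2 ξ) + d2 η ∧
    (r = 1 → z = 0 ∧ η = 0) ∧
    (2 ≤ r → ReachesZero g d1 d2 (r - 1) (p - 1) q z ∧
      ReachesZero (transpose g) d2 d1 (r - 1) (q - 1) p η)

/-- The total-degree-`k` part of the complex. -/
def TotDeg (g : ℤ → ℤ → Submodule K V) (k : ℤ) : Submodule K V := ⨆ p : ℤ, g p (k - p)

/-- `x` (of total degree `k`) is `d`-exact. -/
def DExact (g : ℤ → ℤ → Submodule K V) (d1 d2 : V →ₗ[K] V) (k : ℤ) (x : V) : Prop :=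
  ∃ y ∈ TotDeg g (k - 1), x = d1 y + d2 y

/-- The De Rham cohomology in degree `k` is *full*: every `d`-closed form of total degree
`k` is, modulo `Im d`, a sum of `d`-closed pure-type forms. -/
def DRFull (g : ℤ → ℤ → Submodule K V) (d1 d2 : V →ₗ[K] V) (k : ℤ) : Prop :=
  ∀ x ∈ TotDeg g k, d1 x + d2 x = 0 →
    ∃ (s : Finset ℤ) (c : ℤ → V),
      (∀ p ∈ s, c p ∈ g p (k - p) ∧ d1 (c p) = 0 ∧ d2 (c p) = 0) ∧
      ∃ y ∈ TotDeg g (k - 1), x = (∑ p ∈ s, c p) + (d1 y + d2 y)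

/-- The De Rham cohomology in degree `k` is *pure*: the subspaces `H^{p,q}_{DR}` with
`p + q = k` are in direct sum. -/
def DRPureDeg (g : ℤ → ℤ → Submodule K V) (d1 d2 : V →ₗ[K] V) (k : ℤ) : Prop :=
  ∀ (s : Finset ℤ) (c : ℤ → V),
    (∀ p ∈ s, c p ∈ g p (k - p) ∧ d1 (c p) = 0 ∧ d2 (c p) = 0) →
    DExact g d1 d2 k (∑ p ∈ s, c p) → ∀ p ∈ s, DExact g d1 d2 k (c p)

/-- Purity of the De Rham cohomology: `H^k_{DR} = ⊕_{p+q=k} H^{p,q}_{DR}` for every `k`. -/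
def DRPure (g : ℤ → ℤ → Submodule K V) (d1 d2 : V →ₗ[K] V) : Prop :=
  (∀ k : ℤ, DRFull g d1 d2 k) ∧ ∀ k : ℤ, DRPureDeg g d1 d2 k

/-- The (column) Frölicher spectral sequence degenerates at `E_r`: from page `r` on, the
spaces of `E_s`-closed and `E_s`-exact pure-type forms stabilise. -/
def DegenAt (g : ℤ → ℤ → Submodule K V) (d1 d2 : V →ₗ[K] V) (r : ℕ) : Prop :=
  ∀ s : ℕ, r ≤ s → ∀ p q : ℤ, ∀ x ∈ g p q,
    (ErClosed g d1 d2 s p q x ↔ ErClosed g d1 d2 (s + 1) p q x) ∧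
    (ErExact g d1 d2 s p q x ↔ ErExact g d1 d2 (s + 1) p q x)

/-- `X` is a page-`r`-`∂∂̄`-manifold: the Frölicher spectral sequence degenerates at
`E_{r+1}` and the De Rham cohomology is pure. -/
def PageDdbar (g : ℤ → ℤ → Submodule K V) (d1 d2 : V →ₗ[K] V) (r : ℕ) : Prop :=
  DegenAt g d1 d2 (r + 1) ∧ DRPure g d1 d2

/-- Dimension of a subquotient `Nm / (Dn ∩ Nm)`. -/
noncomputable def hdim (Nm Dn : Submodule K V) : ℕ :=
  Module.finrank K (↥Nm ⧸ (Dn.comap Nm.subtype))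

lemma mem_totDeg (g : ℤ → ℤ → Submodule K V) {a b k : ℤ} {x : V}
    (hx : x ∈ g a b) (hk : a + b = k) : x ∈ TotDeg g k := by
  have : b = k - a := by omega
  subst this
  exact (le_iSup (fun p => g p (k - p)) a) hx

lemma telescope {W : Type} [AddCommGroup W] [Module ℂ W]
    (d1 d2 : W →ₗ[ℂ] W) (u v : ℕ → W) (η z : W)
    (hu0 : d1 η = d2 (u 0)) (hv0 : d2 z = d1 (v 0))
    (N : ℕ)
    (hu : ∀ l < N, d1 (u l) = d2 (u (l + 1)))
    (hv : ∀ l < N, d2 (v l) = d1 (v (l + 1))) :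
    d1 η + d2 z + ∑ l ∈ Finset.range (N + 1),
        ((-1 : ℂ) ^ (l + 1)) • (d1 (u l) + d2 (u l) + d1 (v l) + d2 (v l)) =
      ((-1 : ℂ) ^ (N + 1)) • (d1 (u N) + d2 (v N)) := by
  induction N with
  | zero =>
    rw [Finset.sum_range_one, hu0, hv0]
    module
  | succ n ih =>
    have ih' := ih (fun l hl => hu l (by omega)) (fun l hl => hv l (by omega))
    rw [Finset.sum_range_succ, ← add_assoc, ih', hu n (by omega), hv n (by omega)]
    module

/-- Let `X` be a compact complex manifold and `r ≥ 1`.  If a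
`(p,q)`-form `α` is `E_rĒ_r`-exact (i.e. `α = ∂ζ + ∂∂̄ξ + ∂̄η` with `∂̄ζ` and `∂η`
reaching `0` in at most `r-1` steps), then `α` is `d`-exact.  (The explicit telescoping
witness is `α = d[(ζ+η) + ∂̄ξ − w_{r-3} + ⋯ + (−1)^r w₀]`, `w_j = u_j + v_j`.) -/
theorem statement14 {W : Type} [AddCommGroup W] [Module ℂ W]
    (g : ℤ → ℤ → Submodule ℂ W) (d1 d2 : W →ₗ[ℂ] W)
    (hdc : IsBigradedDC g d1 d2)
    (r : ℕ) (hr : 1 ≤ r) (p q : ℤ) (α : W)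
    (hα : α ∈ g p q) (hex : ErErBarExact g d1 d2 r p q α) :
    DExact g d1 d2 (p + q) α := by
  obtain ⟨z, ξ, η, hz, hξ, hη, hαeq, h1, h2⟩ := hex
  have hd2ξ : d2 ξ ∈ g (p - 1) q := by
    have := hdc.d2_mem _ _ _ hξ
    simpa using this
  have hd2ξ_tot : d2 ξ ∈ TotDeg g (p + q - 1) := mem_totDeg g hd2ξ (by ring)
  have hz_tot : z ∈ TotDeg g (p + q - 1) := mem_totDeg g hz (by ring)
  have hη_tot : η ∈ TotDeg g (p + q - 1) := mem_totDeg g hη (by ring)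
  rcases eq_or_lt_of_le hr with hr1 | hr2
  · -- r = 1
    obtain ⟨hz0, hη0⟩ := h1 hr1.symm
    refine ⟨d2 ξ, hd2ξ_tot, ?_⟩
    rw [hαeq, hz0, hη0, map_zero, map_zero, hdc.d2_sq ξ]
    abel
  · -- r ≥ 2
    obtain ⟨hzchain, hηchain⟩ := h2 hr2
    obtain ⟨v, hvmem, hv1, hv2⟩ := hzchain
    obtain ⟨u, humem, hu1, hu2⟩ := hηchain
    rcases eq_or_lt_of_le (show 2 ≤ r from hr2) with hr2' | hr3
    · -- r = 2
      have hz0 : d2 z = 0 := hv1 (by omega)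
      have hη0 : d1 η = 0 := hu1 (by omega)
      refine ⟨z + η + d2 ξ, ?_, ?_⟩
      · exact add_mem (add_mem hz_tot hη_tot) hd2ξ_tot
      · rw [hαeq]
        simp only [map_add, hz0, hη0, hdc.d2_sq ξ]
        abel
    · -- r ≥ 3
      have hm : 2 ≤ r - 1 := by omega
      obtain ⟨hv0, hvN, hvstep⟩ := hv2 hm
      obtain ⟨hu0, huN, hustep⟩ := hu2 hm
      set N : ℕ := r - 3 with hN
      have hNeq : r - 1 - 2 = N := by omega
      rw [hNeq] at hvN huN
      have hu' : ∀ l < N, d1 (u l) = d2 (u (l + 1)) := fun l hl =>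
        hustep l (by omega)
      have hv' : ∀ l < N, d2 (v l) = d1 (v (l + 1)) := fun l hl =>
        hvstep l (by omega)
      have key := telescope d1 d2 u v η z hu0 hv0 N hu' hv'
      rw [huN, hvN, add_zero, smul_zero] at key
      refine ⟨z + η + d2 ξ + ∑ l ∈ Finset.range (N + 1),
          ((-1 : ℂ) ^ (l + 1)) • (u l + v l), ?_, ?_⟩
      · refine add_mem (add_mem (add_mem hz_tot hη_tot) hd2ξ_tot) (Submodule.sum_mem _ ?_)
        intro l _
        refine Submodule.smul_mem _ _ (add_mem ?_ ?_)
        · have := humem l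
          exact mem_totDeg g this (by push_cast; ring)
        · have := hvmem l
          exact mem_totDeg g this (by push_cast; ring)
      · set S : W := ∑ l ∈ Finset.range (N + 1), ((-1 : ℂ) ^ (l + 1)) • (u l + v l)
          with hS
        have hdS : d1 S + d2 S = ∑ l ∈ Finset.range (N + 1),
            ((-1 : ℂ) ^ (l + 1)) • (d1 (u l) + d2 (u l) + d1 (v l) + d2 (v l)) := by
          rw [hS, map_sum, map_sum, ← Finset.sum_add_distrib]
          refine Finset.sum_congr rfl fun l _ => ?_
          rw [map_smul, map_smul, ← smul_add]
          congr 1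
          simp only [map_add]
          abel
        have hrhs : d1 (z + η + d2 ξ + S) + d2 (z + η + d2 ξ + S)
            = (d1 z + d1 (d2 ξ) + d2 η) +
              (d1 η + d2 z + (d1 S + d2 S)) + d2 (d2 ξ) := by
          simp only [map_add]
          abel
        rw [hαeq, hrhs, hdS, key, hdc.d2_sq ξ]
        abel

end Stmt14
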